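/- (i) For any s, t ∈ S with s ≠ t, the subspace Π(s,t) = span{s̃, t̃} of ℝ^{n+1} is 2-dimensional, and the restriction of the quadratic form q to Π(s,t) is nondegenerate of signature (1,1). (ii) Conversely, if Π is a 2-dimensional subspace of ℝ^{n+1} on which q restricts to a nondegenerate form of signature (1,1), then there exist s, t ∈ S with s ≠ t and Π = span{s̃, t̃}. -/

import Mathlib

open MeasureTheory Matrix
open scoped RealInnerProductSpace

noncomputable section

/-- The Lorentzian bilinear form `[x,y] = x₀y₀ − Σ_{i=1}^n x_i y_i` on `ℝ^{n+1}`. -/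
def lform (n : ℕ) (x y : Fin (n+1) → ℝ) : ℝ :=
  x 0 * y 0 - ∑ i : Fin n, x i.succ * y i.succ

/-- For `x ∈ S ⊂ ℝⁿ`, `x̃ = (1, x₁, …, x_n) ∈ ℝ^{n+1}`. -/
def tilde (n : ℕ) (x : EuclideanSpace ℝ (Fin n)) : Fin (n+1) → ℝ :=
  Fin.cons 1 (fun i => x i)

/-- Membership in `G = SO₀(1,n)`. -/
def IsLorentz (n : ℕ) (g : Matrix (Fin (n+1)) (Fin (n+1)) ℝ) : Prop :=
  (∀ x y : Fin (n+1) → ℝ, lform n (g.mulVec x) (g.mulVec y) = lform n x y)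
    ∧ g.det = 1 ∧ 0 < g 0 0

/-- The conformal action of `G` on the sphere: `g(x)ᵢ = (g x̃)ᵢ / (g x̃)₀`. -/
def sphAct (n : ℕ) (g : Matrix (Fin (n+1)) (Fin (n+1)) ℝ)
    (x : EuclideanSpace ℝ (Fin n)) : EuclideanSpace ℝ (Fin n) :=
  WithLp.toLp 2 (fun i : Fin n => g.mulVec (tilde n x) i.succ / g.mulVec (tilde n x) 0)

/-- The conformal factor `κ(g,x) = (g x̃)₀⁻¹`. -/
def kappa (n : ℕ) (g : Matrix (Fin (n+1)) (Fin (n+1)) ℝ)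
    (x : EuclideanSpace ℝ (Fin n)) : ℝ :=
  (g.mulVec (tilde n x) 0)⁻¹

lemma lform_symm (n : ℕ) (x y : Fin (n+1) → ℝ) : lform n x y = lform n y x := by
  simp only [lform, mul_comm]

lemma lform_add_right (n : ℕ) (x y z : Fin (n+1) → ℝ) :
    lform n x (y + z) = lform n x y + lform n x z := by
  simp only [lform, Pi.add_apply, mul_add, Finset.sum_add_distrib]; ring

lemma lform_smul_right (n : ℕ) (c : ℝ) (x y : Fin (n+1) → ℝ) :
    lform n x (c • y) = c * lform n x y := by
  simp only [lform, Pi.smul_apply, smul_eq_mul]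
  have h : (∑ i : Fin n, x i.succ * (c * y i.succ)) = c * ∑ i : Fin n, x i.succ * y i.succ := by
    rw [Finset.mul_sum]; exact Finset.sum_congr rfl fun i _ => by ring
  rw [h]; ring

lemma lform_add_left (n : ℕ) (x y z : Fin (n+1) → ℝ) :
    lform n (x + y) z = lform n x z + lform n y z := by
  rw [lform_symm, lform_add_right, lform_symm n z, lform_symm n z]

lemma lform_smul_left (n : ℕ) (c : ℝ) (x y : Fin (n+1) → ℝ) :
    lform n (c • x) y = c * lform n x y := by
  rw [lform_symm, lform_smul_right, lform_symm]

lemma lform_sub_right (n : ℕ) (x y z : Fin (n+1) → ℝ) :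
    lform n x (y - z) = lform n x y - lform n x z := by
  rw [sub_eq_add_neg, lform_add_right, ← neg_one_smul ℝ z, lform_smul_right]; ring

lemma lform_zero_right (n : ℕ) (x : Fin (n+1) → ℝ) : lform n x 0 = 0 := by
  simp [lform]

lemma lform_comb (n : ℕ) (a b c d : ℝ) (x y : Fin (n+1) → ℝ) :
    lform n (a • x + b • y) (c • x + d • y) =
      a*c * lform n x x + a*d * lform n x y + b*c * lform n y x + b*d * lform n y y := by
  rw [lform_add_left, lform_smul_left, lform_smul_left, lform_add_right, lform_add_right,
    lform_smul_right, lform_smul_right, lform_smul_right, lform_smul_right]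
  ring

lemma lform_tilde (n : ℕ) (s t : EuclideanSpace ℝ (Fin n)) :
    lform n (tilde n s) (tilde n t) = 1 - ∑ i, s i * t i := by
  simp [lform, tilde]

lemma sum_mul_self_eq_one (n : ℕ) (s : EuclideanSpace ℝ (Fin n)) (hs : ‖s‖ = 1) :
    ∑ i, s i * s i = 1 := by
  have := real_inner_self_eq_norm_sq s
  rw [hs] at this
  simp only [PiLp.inner_apply, RCLike.inner_apply', conj_trivial, one_pow] at this; exact this

lemma mem_span_pair_left {M : Type*} [AddCommGroup M] [Module ℝ M] (x y : M) :
    x ∈ Submodule.span ℝ {x, y} := Submodule.subset_span (Set.mem_insert _ _)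

lemma mem_span_pair_right {M : Type*} [AddCommGroup M] [Module ℝ M] (x y : M) :
    y ∈ Submodule.span ℝ {x, y} := Submodule.subset_span (Set.mem_insert_of_mem _ rfl)

lemma span_pair_smul {M : Type*} [AddCommGroup M] [Module ℝ M] (c d : ℝ)
    (hc : c ≠ 0) (hd : d ≠ 0) (x y : M) :
    Submodule.span ℝ {c • x, d • y} = Submodule.span ℝ {x, y} := by
  apply le_antisymm
  · rw [Submodule.span_le, Set.insert_subset_iff, Set.singleton_subset_iff]
    exact ⟨Submodule.smul_mem _ c (mem_span_pair_left x y),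
      Submodule.smul_mem _ d (mem_span_pair_right x y)⟩
  · rw [Submodule.span_le, Set.insert_subset_iff, Set.singleton_subset_iff]
    constructor
    · have hx : c⁻¹ • (c • x) ∈ Submodule.span ℝ {c • x, d • y} :=
        Submodule.smul_mem _ _ (mem_span_pair_left _ _)
      rwa [smul_smul, inv_mul_cancel₀ hc, one_smul] at hx
    · have hy : d⁻¹ • (d • y) ∈ Submodule.span ℝ {c • x, d • y} :=
        Submodule.smul_mem _ _ (mem_span_pair_right _ _)
      rwa [smul_smul, inv_mul_cancel₀ hd, one_smul] at hy

lemma coord0_ne_zero (n : ℕ) (u : Fin (n+1) → ℝ) (hu : u ≠ 0)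
    (hq : lform n u u = 0) : u 0 ≠ 0 := by
  intro h0
  have hsum : ∑ i : Fin n, u i.succ * u i.succ = 0 := by
    simp only [lform, h0, zero_mul, zero_sub, neg_eq_zero] at hq; exact hq
  have hz : ∀ i : Fin n, u i.succ = 0 := by
    intro i
    have := (Finset.sum_eq_zero_iff_of_nonneg
      (fun j _ => mul_self_nonneg (u j.succ))).1 hsum i (Finset.mem_univ i)
    exact mul_self_eq_zero.1 this
  apply hu
  funext j
  show u j = 0
  exact Fin.cases h0 hz j

lemma exists_tilde (n : ℕ) (u : Fin (n+1) → ℝ) (hu : u ≠ 0) (hq : lform n u u = 0) :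
    ∃ s : EuclideanSpace ℝ (Fin n), ‖s‖ = 1 ∧ tilde n s = (u 0)⁻¹ • u := by
  have h0 := coord0_ne_zero n u hu hq
  refine ⟨(WithLp.toLp 2 (fun i => (u 0)⁻¹ * u i.succ : Fin n → ℝ) : EuclideanSpace ℝ (Fin n)), ?_, ?_⟩
  · have hsum : ∑ i : Fin n, u i.succ * u i.succ = u 0 * u 0 := by
      simp only [lform] at hq; linarith
    set s : EuclideanSpace ℝ (Fin n) := WithLp.toLp 2 (fun i => (u 0)⁻¹ * u i.succ : Fin n → ℝ) with hs
    have h1 : ∑ i, s i * s i = 1 := by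
      have : ∑ i, s i * s i = (u 0)⁻¹ * (u 0)⁻¹ * ∑ i : Fin n, u i.succ * u i.succ := by
        rw [Finset.mul_sum]
        exact Finset.sum_congr rfl fun i _ => by simp [hs]; ring
      rw [this, hsum]
      field_simp
    have h2 : (inner ℝ s s : ℝ) = 1 := by
      simp only [PiLp.inner_apply, RCLike.inner_apply', conj_trivial]; exact h1
    have h3 : ‖s‖ ^ 2 = 1 := by rw [← real_inner_self_eq_norm_sq]; exact h2
    calc ‖s‖ = Real.sqrt (‖s‖ ^ 2) := (Real.sqrt_sq (norm_nonneg s)).symm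
      _ = 1 := by rw [h3, Real.sqrt_one]
  · funext j
    refine Fin.cases ?_ ?_ j
    · show (1 : ℝ) = (u 0)⁻¹ * u 0
      rw [inv_mul_cancel₀ h0]
    · intro i
      show (u 0)⁻¹ * u i.succ = (u 0)⁻¹ * u i.succ
      rfl

/-- (i) for distinct s,t ∈ S, Π(s,t) = span{s̃,t̃} is 2-dimensional and q
restricts on it to a nondegenerate form of signature (1,1) (i.e. equals u²−v² in some
basis); (ii) conversely every 2-dimensional subspace on which q has signature (1,1) is of
the form span{s̃,t̃} for distinct s,t ∈ S. -/
theorem statement14 (n : ℕ) (hn : 2 ≤ n) :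
    (∀ s t : EuclideanSpace ℝ (Fin n), ‖s‖ = 1 → ‖t‖ = 1 → s ≠ t →
      Module.finrank ℝ (Submodule.span ℝ {tilde n s, tilde n t}) = 2 ∧
      ∃ e f : Fin (n+1) → ℝ,
        e ∈ Submodule.span ℝ {tilde n s, tilde n t} ∧
        f ∈ Submodule.span ℝ {tilde n s, tilde n t} ∧
        Submodule.span ℝ {e, f} = Submodule.span ℝ {tilde n s, tilde n t} ∧
        ∀ a b : ℝ, lform n (a • e + b • f) (a • e + b • f) = a ^ 2 - b ^ 2) ∧
    (∀ W : Submodule ℝ (Fin (n+1) → ℝ), Module.finrank ℝ W = 2 →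
      (∃ e f : Fin (n+1) → ℝ, e ∈ W ∧ f ∈ W ∧ Submodule.span ℝ {e, f} = W ∧
        ∀ a b : ℝ, lform n (a • e + b • f) (a • e + b • f) = a ^ 2 - b ^ 2) →
      ∃ s t : EuclideanSpace ℝ (Fin n), ‖s‖ = 1 ∧ ‖t‖ = 1 ∧ s ≠ t ∧
        W = Submodule.span ℝ {tilde n s, tilde n t}) := by
  constructor
  · -- Part (i)
    intro s t hs ht hst
    set A := tilde n s with hA
    set B := tilde n t with hB
    have qAA : lform n A A = 0 := by
      rw [hA, lform_tilde, sum_mul_self_eq_one n s hs]; ring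
    have qBB : lform n B B = 0 := by
      rw [hB, lform_tilde, sum_mul_self_eq_one n t ht]; ring
    have hinner : (inner ℝ s t : ℝ) = ∑ i, s i * t i := by
      simp only [PiLp.inner_apply, RCLike.inner_apply', conj_trivial]
    have hip : lform n A B = 1 - (inner ℝ s t : ℝ) := by
      rw [hA, hB, lform_tilde, hinner]
    have hlt : (inner ℝ s t : ℝ) < 1 := by
      refine lt_of_le_of_ne ?_ fun h => hst ((inner_eq_one_iff_of_norm_eq_one hs ht).mp h)
      have := real_inner_le_norm s t
      rw [hs, ht] at this; linarith
    set c := lform n A B with hc_def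
    have hc : 0 < c := by rw [hip]; linarith
    have qBA : lform n B A = c := by rw [lform_symm]
    set r := Real.sqrt (2 * c) with hr_def
    have hr : 0 < r := Real.sqrt_pos.2 (by linarith)
    have hr2 : r ^ 2 = 2 * c := Real.sq_sqrt (by linarith)
    have hrne : r ≠ 0 := ne_of_gt hr
    -- linear independence
    have hind : LinearIndependent ℝ ![A, B] := by
      rw [LinearIndependent.pair_iff]
      intro p q hpq
      have h1 : lform n A (p • A + q • B) = q * c := by
        rw [lform_add_right, lform_smul_right, lform_smul_right, qAA, ← hc_def]; ring
      have h2 : lform n B (p • A + q • B) = p * c := by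
        rw [lform_add_right, lform_smul_right, lform_smul_right, qBB, qBA]; ring
      rw [hpq, lform_zero_right] at h1 h2
      constructor
      · rcases mul_eq_zero.1 h2.symm with h | h
        · exact h
        · exact absurd h (ne_of_gt hc)
      · rcases mul_eq_zero.1 h1.symm with h | h
        · exact h
        · exact absurd h (ne_of_gt hc)
    have hrank : Module.finrank ℝ (Submodule.span ℝ {A, B}) = 2 := by
      have h := finrank_span_eq_card hind
      rwa [Matrix.range_cons_cons_empty, Fintype.card_fin] at h
    set e : Fin (n+1) → ℝ := r⁻¹ • A + r⁻¹ • B with he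
    set f : Fin (n+1) → ℝ := r⁻¹ • A + (-r⁻¹) • B with hf
    have qee : lform n e e = 1 := by
      rw [he, lform_comb, qAA, qBB, ← hc_def, qBA]
      have : r⁻¹ * r⁻¹ * (2 * c) = 1 := by
        rw [← hr2]; field_simp
      nlinarith [this]
    have qff : lform n f f = -1 := by
      rw [hf, lform_comb, qAA, qBB, ← hc_def, qBA]
      have : r⁻¹ * r⁻¹ * (2 * c) = 1 := by
        rw [← hr2]; field_simp
      nlinarith [this]
    have qef : lform n e f = 0 := by
      rw [he, hf, lform_comb, qAA, qBB, ← hc_def, qBA]; ring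
    have qfe : lform n f e = 0 := by rw [lform_symm]; exact qef
    have heS : e ∈ Submodule.span ℝ {A, B} :=
      Submodule.add_mem _ (Submodule.smul_mem _ _ (mem_span_pair_left A B))
        (Submodule.smul_mem _ _ (mem_span_pair_right A B))
    have hfS : f ∈ Submodule.span ℝ {A, B} :=
      Submodule.add_mem _ (Submodule.smul_mem _ _ (mem_span_pair_left A B))
        (Submodule.smul_mem _ _ (mem_span_pair_right A B))
    have hef_sum : e + f = (2 * r⁻¹) • A := by rw [he, hf]; module
    have hef_diff : e - f = (2 * r⁻¹) • B := by rw [he, hf]; module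
    have hAval : A = (r / 2) • (e + f) := by
      rw [hef_sum, smul_smul]
      have : r / 2 * (2 * r⁻¹) = 1 := by field_simp
      rw [this, one_smul]
    have hBval : B = (r / 2) • (e - f) := by
      rw [hef_diff, smul_smul]
      have : r / 2 * (2 * r⁻¹) = 1 := by field_simp
      rw [this, one_smul]
    refine ⟨hrank, e, f, heS, hfS, ?_, ?_⟩
    · apply le_antisymm
      · rw [Submodule.span_le, Set.insert_subset_iff, Set.singleton_subset_iff]
        exact ⟨heS, hfS⟩
      · rw [Submodule.span_le, Set.insert_subset_iff, Set.singleton_subset_iff]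
        constructor
        · rw [hAval]
          exact Submodule.smul_mem _ _ (Submodule.add_mem _ (mem_span_pair_left e f)
            (mem_span_pair_right e f))
        · rw [hBval]
          exact Submodule.smul_mem _ _ (Submodule.sub_mem _ (mem_span_pair_left e f)
            (mem_span_pair_right e f))
    · intro a b
      rw [lform_comb, qee, qff, qef, qfe]; ring
  · -- Part (ii)
    rintro W hW ⟨e, f, heW, hfW, hspan, hq⟩
    have qee : lform n e e = 1 := by simpa using hq 1 0
    have qff : lform n f f = -1 := by
      have := hq 0 1; simpa using this
    have qef : lform n e f = 0 := by
      have h11 : lform n (e + f) (e + f) = 0 := by simpa using hq 1 1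
      rw [lform_add_left, lform_add_right, lform_add_right, qee, qff,
        lform_symm n f e] at h11
      linarith
    have qfe : lform n f e = 0 := by rw [lform_symm]; exact qef
    set u : Fin (n+1) → ℝ := e + f with hu_def
    set v : Fin (n+1) → ℝ := e - f with hv_def
    have quu : lform n u u = 0 := by
      rw [hu_def, lform_add_left, lform_add_right, lform_add_right, qee, qff, qef, qfe]; ring
    have qvv : lform n v v = 0 := by
      rw [hv_def, sub_eq_add_neg, ← neg_one_smul ℝ f]
      rw [lform_add_left, lform_add_right, lform_add_right, lform_smul_left,
        lform_smul_right, lform_smul_right, lform_smul_left, qee, qff, qef, qfe]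
      ring
    have qeu : lform n e u = 1 := by rw [hu_def, lform_add_right, qee, qef]; ring
    have qev : lform n e v = 1 := by rw [hv_def, lform_sub_right, qee, qef]; ring
    have hune : u ≠ 0 := by
      intro h; rw [h, lform_zero_right] at qeu; norm_num at qeu
    have hvne : v ≠ 0 := by
      intro h; rw [h, lform_zero_right] at qev; norm_num at qev
    obtain ⟨s, hs1, hsu⟩ := exists_tilde n u hune quu
    obtain ⟨t, ht1, htv⟩ := exists_tilde n v hvne qvv
    have hu0 : u 0 ≠ 0 := coord0_ne_zero n u hune quu
    have hv0 : v 0 ≠ 0 := coord0_ne_zero n v hvne qvv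
    have hfne : f ≠ 0 := by
      intro h; rw [h, lform_zero_right] at qff; norm_num at qff
    refine ⟨s, t, hs1, ht1, ?_, ?_⟩
    · intro hst
      have heq : (u 0)⁻¹ • u = (v 0)⁻¹ • v := by rw [← hsu, ← htv, hst]
      have h1 := congrArg (lform n e) heq
      rw [lform_smul_right, lform_smul_right, qeu, qev, mul_one, mul_one] at h1
      have hαβ : u 0 = v 0 := inv_injective h1
      rw [hαβ] at heq
      have huv : u = v := smul_right_injective (Fin (n+1) → ℝ) (inv_ne_zero hv0) heq
      apply hfne
      have h2 : f + f = u - v := by rw [hu_def, hv_def]; abel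
      rw [huv, sub_self] at h2
      have h3 : (2 : ℝ) • f = 0 := by rw [two_smul]; exact h2
      exact (smul_eq_zero.1 h3).resolve_left (by norm_num)
    · rw [hsu, htv, span_pair_smul _ _ (inv_ne_zero hu0) (inv_ne_zero hv0)]
      rw [← hspan]
      apply le_antisymm
      · rw [Submodule.span_le, Set.insert_subset_iff, Set.singleton_subset_iff]
        constructor
        · have he' : e = (2 : ℝ)⁻¹ • (u + v) := by rw [hu_def, hv_def]; module
          rw [he']
          exact Submodule.smul_mem _ _ (Submodule.add_mem _ (mem_span_pair_left u v)
            (mem_span_pair_right u v))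
        · have hf' : f = (2 : ℝ)⁻¹ • (u - v) := by rw [hu_def, hv_def]; module
          rw [hf']
          exact Submodule.smul_mem _ _ (Submodule.sub_mem _ (mem_span_pair_left u v)
            (mem_span_pair_right u v))
      · rw [Submodule.span_le, Set.insert_subset_iff, Set.singleton_subset_iff]
        exact ⟨Submodule.add_mem _ (mem_span_pair_left e f) (mem_span_pair_right e f),
          Submodule.sub_mem _ (mem_span_pair_left e f) (mem_span_pair_right e f)⟩
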